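/- For every fixed x > 0 and p ∈ (0,1]: if 1/p > ((λ+r)/p − λ + σ² − μ)·x, then H(x,ξ,p) → −∞ as ξ → +∞; if instead 1/p ≤ ((λ+r)/p − λ + σ² − μ)·x, then H(x,ξ,p) → +∞ as ξ → +∞. -/

import Mathlib

open Set Filter

/-- The Hamiltonian `H(x,ξ,p) = inf_{ω ∈ [0,1)} { L(ω) − (ξ/p)·ω } + ((λ+r)/p − λ + σ² − μ)·x·ξ`. -/
noncomputable def Ham (L : ℝ → ℝ) (lam r mu sig x ξ p : ℝ) : ℝ :=
  sInf ((fun ω => L ω - ξ / p * ω) '' Set.Ico 0 1) +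
    ((lam + r) / p - lam + sig ^ 2 - mu) * x * ξ

theorem stmt_2
    (r mu lam sig : ℝ) (hmu : 0 ≤ mu) (hr : mu < r) (hlam : 0 ≤ lam) (hsig : 0 ≤ sig)
    (L : ℝ → ℝ)
    (hL : ContDiffOn ℝ 2 L (Set.Ico 0 1))
    (hL0 : L 0 = 0)
    (hL1 : ∀ u ∈ Set.Ico (0:ℝ) 1, 0 < deriv L u)
    (hL2 : ∀ u ∈ Set.Ico (0:ℝ) 1, 0 < deriv (deriv L) u)
    (hLtop : Filter.Tendsto L (nhdsWithin 1 (Set.Iio 1)) Filter.atTop)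
    (x : ℝ) (hx : 0 < x) (p : ℝ) (hp : p ∈ Set.Ioc (0:ℝ) 1) :
    (1 / p > ((lam + r) / p - lam + sig ^ 2 - mu) * x →
      Filter.Tendsto (fun ξ => Ham L lam r mu sig x ξ p) Filter.atTop Filter.atBot) ∧
    (1 / p ≤ ((lam + r) / p - lam + sig ^ 2 - mu) * x →
      Filter.Tendsto (fun ξ => Ham L lam r mu sig x ξ p) Filter.atTop Filter.atTop) := by
  obtain ⟨hp0, hp1⟩ := hp
  set c : ℝ := ((lam + r) / p - lam + sig ^ 2 - mu) * x with hc
  -- L is nonnegative on [0,1)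
  have hmono : StrictMonoOn L (Set.Ico 0 1) := by
    apply strictMonoOn_of_deriv_pos (convex_Ico 0 1) hL.continuousOn
    intro u hu
    rw [interior_Ico] at hu
    exact hL1 u ⟨le_of_lt hu.1, hu.2⟩
  have hLnn : ∀ ω ∈ Set.Ico (0:ℝ) 1, 0 ≤ L ω := by
    intro ω hω
    rcases eq_or_lt_of_le hω.1 with h | h
    · rw [← h, hL0]
    · have := hmono (Set.left_mem_Ico.2 one_pos) hω h
      linarith
  have hne : ∀ ξ : ℝ, ((fun ω => L ω - ξ / p * ω) '' Set.Ico 0 1).Nonempty :=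
    fun ξ => (Set.nonempty_Ico.2 one_pos).image _
  have hbdd : ∀ ξ : ℝ, 0 ≤ ξ →
      BddBelow ((fun ω => L ω - ξ / p * ω) '' Set.Ico 0 1) := by
    intro ξ hξ
    refine ⟨-(ξ / p), ?_⟩
    rintro y ⟨ω, hω, rfl⟩
    have hξp : 0 ≤ ξ / p := div_nonneg hξ hp0.le
    have h1 : ξ / p * ω ≤ ξ / p * 1 := mul_le_mul_of_nonneg_left hω.2.le hξp
    have h2 := hLnn ω hω
    simp only
    linarith
  constructor
  · -- Case 1 : 1/p > c
    intro hgt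
    have hcp : c * p < 1 := (lt_div_iff₀ hp0).1 hgt
    set ω₀ : ℝ := max 0 ((c * p + 1) / 2) with hω₀
    have hω₀mem : ω₀ ∈ Set.Ico (0:ℝ) 1 :=
      ⟨le_max_left _ _, max_lt one_pos (by linarith)⟩
    have hω₀gt : c * p < ω₀ := lt_of_lt_of_le (by linarith) (le_max_right _ _)
    have hneg : c - ω₀ / p < 0 := by
      have : c < ω₀ / p := (lt_div_iff₀ hp0).2 (by linarith)
      linarith
    have hlin : Tendsto (fun ξ : ℝ => L ω₀ + (c - ω₀ / p) * ξ) atTop atBot :=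
      tendsto_atBot_add_const_left _ _ ((tendsto_const_mul_atBot_of_neg hneg).2 tendsto_id)
    apply tendsto_atBot_mono' atTop _ hlin
    filter_upwards [eventually_ge_atTop (0 : ℝ)] with ξ hξ0
    have hmem : L ω₀ - ξ / p * ω₀ ∈ (fun ω => L ω - ξ / p * ω) '' Set.Ico 0 1 :=
      ⟨ω₀, hω₀mem, rfl⟩
    have hle : sInf ((fun ω => L ω - ξ / p * ω) '' Set.Ico 0 1) ≤ L ω₀ - ξ / p * ω₀ :=
      csInf_le (hbdd ξ hξ0) hmem
    have key : L ω₀ - ξ / p * ω₀ + c * ξ = L ω₀ + (c - ω₀ / p) * ξ := by ring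
    simp only [Ham, ← hc]
    linarith
  · -- Case 2 : 1/p ≤ c
    intro hcle
    rw [tendsto_atTop]
    intro M
    have hev : ∀ᶠ ω in nhdsWithin 1 (Set.Iio 1), M ≤ L ω :=
      hLtop.eventually (eventually_ge_atTop M)
    rw [Filter.Eventually, mem_nhdsLT_iff_exists_Ioo_subset] at hev
    obtain ⟨l, hl, hM⟩ := hev
    simp only [Set.mem_Iio] at hl
    set l' : ℝ := max l 0 with hl'def
    have hl'1 : l' < 1 := max_lt hl one_pos
    have hl'0 : 0 ≤ l' := le_max_right _ _
    filter_upwards [eventually_ge_atTop (max 0 (p * M / (1 - l')))] with ξ hξ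
    have hξ0 : 0 ≤ ξ := le_trans (le_max_left _ _) hξ
    have hξ1 : p * M / (1 - l') ≤ ξ := le_trans (le_max_right _ _) hξ
    have hξp : 0 ≤ ξ / p := div_nonneg hξ0 hp0.le
    -- key inner bound on the infimum
    have hsinf : M - ξ / p ≤ sInf ((fun ω => L ω - ξ / p * ω) '' Set.Ico 0 1) := by
      apply le_csInf (hne ξ)
      rintro y ⟨ω, hω, rfl⟩
      simp only
      by_cases hωl : l < ω
      · have hMω : M ≤ L ω := hM ⟨hωl, hω.2⟩
        have h1 : ξ / p * ω ≤ ξ / p * 1 := mul_le_mul_of_nonneg_left hω.2.le hξp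
        linarith
      · push_neg at hωl
        have hωl' : ω ≤ l' := le_trans hωl (le_max_left _ _)
        have h1l' : (0:ℝ) < 1 - l' := by linarith
        have h1 : M ≤ ξ * (1 - l') / p := by
          rw [le_div_iff₀ hp0]
          have := (div_le_iff₀ h1l').1 hξ1
          linarith
        have h2 : ξ * (1 - l') / p = ξ / p * (1 - l') := by ring
        have h3 : ξ / p * (1 - l') ≤ ξ / p * (1 - ω) :=
          mul_le_mul_of_nonneg_left (by linarith) hξp
        have h4 : ξ / p * (1 - ω) = ξ / p - ξ / p * ω := by ring
        have h5 := hLnn ω hω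
        linarith
    have hc1 : (c - 1 / p) * ξ = c * ξ - ξ / p := by ring
    have hc2 : 0 ≤ (c - 1 / p) * ξ := mul_nonneg (by linarith) hξ0
    simp only [Ham, ← hc]
    linarith
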